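/- arXiv:1803.04274 — 3 statements merged into one kernel-verified Lean document; each statement's English description precedes it below -/
import Mathlib

section
/- Let q be a prime power and let m = 2n − 1 be an odd positive integer. Then the map sending (g_0, g_1, …, g_{n−1}) ∈ F_{q^m}^n to the map (x,y) ↦ Tr_m(g_0·xy) + Σ_{i=1}^{n−1} Tr_m(g_i·(x·y^{q^i} + x^{q^i}·y)) is a bijection from F_{q^m}^n onto the set of all symmetric F_q-bilinear forms on F_{q^m} viewed as an F_q-vector space; in particular, every symmetric F_q-bilinear form S on F_{q^m} admits unique g_0, …, g_{n−1} ∈ F_{q^m} with S(x,y) = Tr_m(g_0·xy) + Σ_{i=1}^{n−1} Tr_m(g_i·(x·y^{q^i} + x^{q^i}·y)) for all x, y. -/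
set_option linter.unusedSectionVars false

section Aux
variable {F E : Type} [Field F] [Fintype F] [Field E] [Fintype E] [Algebra F E]

lemma aux_pow_add (x y : E) (i : ℕ) :
    (x + y) ^ (Fintype.card F) ^ i = x ^ (Fintype.card F) ^ i + y ^ (Fintype.card F) ^ i := by
  haveI : CharP F (ringChar F) := ringChar.charP F
  obtain ⟨k, hp, hcard⟩ := FiniteField.card F (ringChar F)
  haveI : Fact (ringChar F).Prime := ⟨hp⟩
  haveI : CharP E (ringChar F) := charP_of_injective_algebraMap (algebraMap F E).injective _
  have he : (Fintype.card F) ^ i = (ringChar F) ^ ((k : ℕ) * i) := by rw [hcard, pow_mul]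
  rw [he]
  exact add_pow_char_pow x y (ringChar F) _

lemma aux_pow_algebraMap (c : F) (i : ℕ) :
    (algebraMap F E c) ^ (Fintype.card F) ^ i = algebraMap F E c := by
  rw [← map_pow, FiniteField.pow_card_pow]

lemma aux_pow_smul (c : F) (x : E) (i : ℕ) :
    (c • x) ^ (Fintype.card F) ^ i = c • x ^ (Fintype.card F) ^ i := by
  rw [Algebra.smul_def, Algebra.smul_def, mul_pow, aux_pow_algebraMap]

/-- Frobenius as an `F`-algebra equivalence of `E`. -/
noncomputable def frobAlgEquiv : E ≃ₐ[F] E :=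
  AlgEquiv.ofBijective
    { toFun := fun x => x ^ (Fintype.card F)
      map_one' := one_pow _
      map_mul' := fun x y => mul_pow x y _
      map_zero' := zero_pow Fintype.card_ne_zero
      map_add' := fun x y => by simpa using aux_pow_add (F := F) x y 1
      commutes' := fun c => by simpa using aux_pow_algebraMap (E := E) c 1 }
    (Finite.injective_iff_bijective.mp (RingHom.injective (R := E) (S := E)
      { toFun := fun x => x ^ (Fintype.card F)
        map_one' := one_pow _
        map_mul' := fun x y => mul_pow x y _
        map_zero' := zero_pow Fintype.card_ne_zero
        map_add' := fun x y => by simpa using aux_pow_add (F := F) x y 1 }))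

end Aux

section Aux2
variable {F E : Type} [Field F] [Fintype F] [Field E] [Fintype E] [Algebra F E]

lemma aux_trace_pow (x : E) (i : ℕ) :
    Algebra.trace F E (x ^ (Fintype.card F) ^ i) = Algebra.trace F E x := by
  induction i with
  | zero => simp
  | succ i ih =>
      have h : x ^ (Fintype.card F) ^ (i + 1) =
          frobAlgEquiv (F := F) (x ^ (Fintype.card F) ^ i) := by
        show _ = (x ^ (Fintype.card F) ^ i) ^ (Fintype.card F)
        rw [← pow_mul, ← pow_succ]
      rw [h, Algebra.trace_eq_of_algEquiv, ih]

lemma aux_pow_finrank (x : E) : x ^ (Fintype.card F) ^ (Module.finrank F E) = x := by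
  rw [← Module.card_eq_pow_finrank (K := F) (V := E), FiniteField.pow_card]

lemma aux_trace_nondeg (a : E) (h : ∀ x : E, Algebra.trace F E (a * x) = 0) : a = 0 := by
  haveI : FiniteDimensional F E := Module.Finite.of_finite
  haveI : Algebra.IsSeparable F E := inferInstance
  exact (traceForm_nondegenerate F E).1 a
    (fun x => by simpa [Algebra.traceForm_apply] using h x)

open Polynomial in
lemma aux_lin_poly (q : ℕ) (hq : 1 < q) (M : ℕ) (hM : Fintype.card E = q ^ M)
    (a : ℕ → E) (h : ∀ x : E, ∑ j ∈ Finset.range M, a j * x ^ q ^ j = 0) :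
    ∀ j < M, a j = 0 := by
  have hM0 : 0 < M := by
    by_contra hc
    push_neg at hc
    interval_cases M
    simpa [hM] using Fintype.one_lt_card (α := E)
  set P : Polynomial E := ∑ j ∈ Finset.range M, C (a j) * X ^ q ^ j with hP
  have hdeg : P.natDegree < Fintype.card E := by
    refine lt_of_le_of_lt (natDegree_sum_le_of_forall_le _ _ (n := q ^ (M - 1)) ?_) ?_
    · intro j hj
      refine le_trans (natDegree_C_mul_le _ _) ?_
      simpa using pow_le_pow_right₀ (le_of_lt hq) (by have := Finset.mem_range.mp hj; omega : j ≤ M - 1)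
    · rw [hM]
      exact Nat.pow_lt_pow_right hq (by omega)
  have hP0 : P = 0 := by
    refine eq_zero_of_natDegree_lt_card_of_eval_eq_zero P Function.injective_id
      (fun x => ?_) hdeg
    simpa [P, eval_finset_sum] using h x
  intro j hj
  have hcoeff : P.coeff (q ^ j) = a j := by
    rw [hP, finset_sum_coeff, Finset.sum_eq_single j]
    · simp [coeff_C_mul, coeff_X_pow]
    · intro b _ hbj
      have : ¬ (q ^ j = q ^ b) := fun hc =>
        hbj ((Nat.pow_right_injective hq hc).symm)
      simp [coeff_C_mul, coeff_X_pow, this]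
    · exact fun hc => absurd (Finset.mem_range.2 hj) hc
  rw [hP0] at hcoeff
  simpa using hcoeff.symm

end Aux2

lemma aux_filter_sum {M : Type*} [AddCommMonoid M] (n : ℕ) (hn : 0 < n) (f : Fin n → M) (g : ℕ → M)
    (hfg : ∀ (j : ℕ) (hj : j < n), 0 < j → f ⟨j, hj⟩ = g j) :
    ∑ i ∈ Finset.univ.filter (fun i : Fin n => (i : ℕ) ≠ 0), f i
      = ∑ j ∈ Finset.Ico 1 n, g j := by
  refine Finset.sum_nbij' (fun i => (i : ℕ))
    (fun j => if hj : j < n then ⟨j, hj⟩ else ⟨0, hn⟩) ?_ ?_ ?_ ?_ ?_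
  · intro i hi
    simp only [Finset.mem_filter, Finset.mem_univ, true_and] at hi
    have := i.isLt
    simp only [Finset.mem_Ico]
    omega
  · intro j hj
    have hj' := Finset.mem_Ico.mp hj
    simp only [dif_pos hj'.2, Finset.mem_filter, Finset.mem_univ, true_and]
    omega
  · intro i hi
    simp only [Finset.mem_filter, Finset.mem_univ, true_and] at hi
    simp [i.isLt]
  · intro j hj
    have hj' := Finset.mem_Ico.mp hj
    simp [dif_pos hj'.2]
  · intro i hi
    simp only [Finset.mem_filter, Finset.mem_univ, true_and] at hi
    simp [hfg i i.isLt (by omega)]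

lemma aux_inj {F E : Type} [Field F] [Fintype F] [Field E] [Fintype E] [Algebra F E]
    (n m : ℕ) (hn : 1 ≤ n) (hm : m = 2 * n - 1)
    (hdim : Module.finrank F E = m) (h : Fin n → E)
    (hzero : ∀ x y : E,
      Algebra.trace F E (h ⟨0, hn⟩ * (x * y)) +
        ∑ i ∈ Finset.univ.filter (fun i : Fin n => (i : ℕ) ≠ 0),
          Algebra.trace F E (h i * (x * y ^ (Fintype.card F) ^ (i : ℕ) +
            x ^ (Fintype.card F) ^ (i : ℕ) * y)) = 0) :
    ∀ i, h i = 0 := by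
  set q := Fintype.card F with hq
  have hq1 : 1 < q := Fintype.one_lt_card
  have hnm : n ≤ m := by omega
  have hm1 : 1 ≤ m := by omega
  set a : ℕ → E := fun j =>
    if hj : j < n then h ⟨j, hj⟩
    else if hj2 : m - j < n then (h ⟨m - j, hj2⟩) ^ q ^ j else 0 with ha
  have ha1 : ∀ (j : ℕ) (hj : j < n), a j = h ⟨j, hj⟩ := by
    intro j hj; simp only [ha, dif_pos hj]
  have ha2 : ∀ (j : ℕ) (_h1 : n ≤ j) (_h2 : j ≤ m), a j = (h ⟨m - j, by omega⟩) ^ q ^ j := by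
    intro j h1 h2; simp only [ha]; rw [dif_neg (by omega), dif_pos (by omega)]
  have hpowm : ∀ z : E, z ^ q ^ m = z := by
    intro z; rw [← hdim]; exact aux_pow_finrank z
  have hL : ∀ x : E, ∑ j ∈ Finset.range m, a j * x ^ q ^ j = 0 := by
    intro x
    apply aux_trace_nondeg (F := F)
    intro y
    have hterm : ∀ i : Fin n,
        Algebra.trace F E (h i * (x * y ^ q ^ (i : ℕ) + x ^ q ^ (i : ℕ) * y))
          = Algebra.trace F E ((h i * x) ^ q ^ (m - (i : ℕ)) * y) +
            Algebra.trace F E (h i * x ^ q ^ (i : ℕ) * y) := by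
      intro i
      have him : (i : ℕ) ≤ m := by have := i.isLt; omega
      rw [mul_add, map_add]
      congr 1
      · rw [← mul_assoc, ← aux_trace_pow (F := F) ((h i * x) * y ^ q ^ (i : ℕ)) (m - (i : ℕ)),
          mul_pow, ← pow_mul]
        have hexp : q ^ (i : ℕ) * q ^ (m - (i : ℕ)) = q ^ m := by
          rw [← pow_add]; congr 1; omega
        rw [hexp, hpowm y]
      · rw [← mul_assoc]
    have expand : Algebra.trace F E ((∑ j ∈ Finset.range m, a j * x ^ q ^ j) * y)
        = Algebra.trace F E (h ⟨0, hn⟩ * (x * y)) +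
          ∑ i ∈ Finset.univ.filter (fun i : Fin n => (i : ℕ) ≠ 0),
            Algebra.trace F E (h i * (x * y ^ q ^ (i : ℕ) + x ^ q ^ (i : ℕ) * y)) := by
      rw [Finset.sum_mul, map_sum]
      have hsplit : (Finset.range m) = Finset.Ico 0 n ∪ Finset.Ico n m := by
        rw [Finset.range_eq_Ico, Finset.Ico_union_Ico_eq_Ico (Nat.zero_le n) hnm]
      rw [hsplit, Finset.sum_union (by
        simp [Finset.disjoint_left, Finset.mem_Ico]; omega)]
      have hA : ∑ j ∈ Finset.Ico 0 n, Algebra.trace F E (a j * x ^ q ^ j * y)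
          = Algebra.trace F E (h ⟨0, hn⟩ * (x * y)) +
            ∑ j ∈ Finset.Ico 1 n, Algebra.trace F E (a j * x ^ q ^ j * y) := by
        rw [← Finset.sum_Ico_consecutive _ (Nat.zero_le 1) hn]
        congr 1
        rw [show Finset.Ico 0 1 = {0} from rfl, Finset.sum_singleton,
          ha1 0 (by omega), pow_zero, pow_one, mul_assoc]
      have hd : ∑ i ∈ Finset.univ.filter (fun i : Fin n => (i : ℕ) ≠ 0),
            Algebra.trace F E (h i * x ^ q ^ (i : ℕ) * y)
          = ∑ j ∈ Finset.Ico 1 n, Algebra.trace F E (a j * x ^ q ^ j * y) := by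
        refine aux_filter_sum n hn _ _ ?_
        intro j hj hj0
        simp only [ha1 j hj]
      have hc : ∑ i ∈ Finset.univ.filter (fun i : Fin n => (i : ℕ) ≠ 0),
            Algebra.trace F E ((h i * x) ^ q ^ (m - (i : ℕ)) * y)
          = ∑ j ∈ Finset.Ico n m, Algebra.trace F E (a j * x ^ q ^ j * y) := by
        have hfg : ∀ (j : ℕ) (hj : j < n), 0 < j →
            Algebra.trace F E ((h ⟨j, hj⟩ * x) ^ q ^ (m - ((⟨j, hj⟩ : Fin n) : ℕ)) * y)
              = Algebra.trace F E (a (m - j) * x ^ q ^ (m - j) * y) := by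
          intro j hj hj0
          have e1 : n ≤ m - j := by omega
          have e2 : m - j ≤ m := by omega
          rw [ha2 (m - j) e1 e2]
          simp only [show m - (m - j) = j from by omega, mul_pow]
        rw [aux_filter_sum n hn
          (fun i : Fin n => Algebra.trace F E ((h i * x) ^ q ^ (m - (i : ℕ)) * y))
          (fun j => Algebra.trace F E (a (m - j) * x ^ q ^ (m - j) * y)) hfg]
        refine Finset.sum_nbij' (fun i => m - i) (fun j => m - j) ?_ ?_ ?_ ?_ ?_
        · intro i hi; have := Finset.mem_Ico.mp hi; simp only [Finset.mem_Ico]; omega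
        · intro j hj; have := Finset.mem_Ico.mp hj; simp only [Finset.mem_Ico]; omega
        · intro i hi; have := Finset.mem_Ico.mp hi; show m - (m - i) = i; omega
        · intro j hj; have := Finset.mem_Ico.mp hj; show m - (m - j) = j; omega
        · intro i hi; have := Finset.mem_Ico.mp hi
          simp only [show m - (m - i) = i from by omega]
      rw [Finset.sum_congr rfl (fun i _ => hterm i), Finset.sum_add_distrib, hA, hd, hc]
      ring
    rw [expand, hzero]
  have hcard : Fintype.card E = q ^ m := by
    rw [Module.card_eq_pow_finrank (K := F) (V := E), hdim]
  have hall := aux_lin_poly q hq1 m hcard a hL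
  intro i
  have him : (i : ℕ) < m := by have := i.isLt; omega
  have hz := hall i him
  rw [ha1 i i.isLt] at hz
  simpa using hz

lemma aux_S {F E : Type} [Field F] [Fintype F] [Field E] [Fintype E] [Algebra F E]
    (n : ℕ) (hn : 1 ≤ n) (g : Fin n → E) :
    ∃ S : E →ₗ[F] E →ₗ[F] F, (∀ x y, S x y = S y x) ∧ ∀ x y : E,
      S x y = Algebra.trace F E (g ⟨0, hn⟩ * (x * y)) +
        ∑ i ∈ Finset.univ.filter (fun i : Fin n => (i : ℕ) ≠ 0),
          Algebra.trace F E (g i * (x * y ^ (Fintype.card F) ^ (i : ℕ) +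
            x ^ (Fintype.card F) ^ (i : ℕ) * y)) := by
  set Q := Fintype.card F with hQ
  refine ⟨LinearMap.mk₂ F (fun x y : E =>
      Algebra.trace F E (g ⟨0, hn⟩ * (x * y)) +
        ∑ i ∈ Finset.univ.filter (fun i : Fin n => (i : ℕ) ≠ 0),
          Algebra.trace F E (g i * (x * y ^ Q ^ (i : ℕ) + x ^ Q ^ (i : ℕ) * y)))
    ?_ ?_ ?_ ?_, ?_, fun x y => rfl⟩
  · intro x1 x2 y
    simp only [hQ, aux_pow_add (F := F), add_mul, mul_add, map_add, Finset.sum_add_distrib]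
    ring
  · intro c x y
    simp only [hQ, aux_pow_smul (F := F), smul_mul_assoc, mul_smul_comm, map_smul,
      smul_add, Finset.smul_sum]
    simp only [← smul_add, mul_smul_comm, map_smul]
  · intro x y1 y2
    simp only [hQ, aux_pow_add (F := F), add_mul, mul_add, map_add, Finset.sum_add_distrib]
    ring
  · intro c x y
    simp only [hQ, aux_pow_smul (F := F), smul_mul_assoc, mul_smul_comm, map_smul,
      smul_add, Finset.smul_sum]
    simp only [← smul_add, mul_smul_comm, map_smul]
  · intro x y
    simp only [LinearMap.mk₂_apply]
    congr 1
    · rw [mul_comm x y]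
    · refine Finset.sum_congr rfl fun i _ => ?_
      rw [show x * y ^ Q ^ (i : ℕ) + x ^ Q ^ (i : ℕ) * y
          = y * x ^ Q ^ (i : ℕ) + y ^ Q ^ (i : ℕ) * x from by ring]

open scoped BigOperators

/-- **Theorem (canonical representation of symmetric bilinear forms, odd extension degree).**
For `m = 2n - 1` odd, the map
`(g_0, …, g_{n-1}) ↦ ((x, y) ↦ Tr_m (g_0 x y) + ∑_{i=1}^{n-1} Tr_m (g_i (x y^{q^i} + x^{q^i} y)))`
is a bijection from `F_{q^m}^n` onto the set of all symmetric `F_q`-bilinear forms on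
`F_{q^m}` viewed as an `F_q`-vector space. -/
theorem canonical_representation_of_symmetric_bilinear_forms_odd_degree
    (F E : Type) [Field F] [Fintype F] [Field E] [Fintype E] [Algebra F E]
    (q : ℕ) (hq : q = Fintype.card F)
    (n m : ℕ) (hn : 1 ≤ n) (hm : m = 2 * n - 1)
    (hdim : Module.finrank F E = m) :
    Set.BijOn
      (fun g : Fin n → E => fun x y : E =>
        Algebra.trace F E (g ⟨0, hn⟩ * (x * y)) +
          ∑ i ∈ Finset.univ.filter (fun i : Fin n => (i : ℕ) ≠ 0),
            Algebra.trace F E (g i * (x * y ^ q ^ (i : ℕ) + x ^ q ^ (i : ℕ) * y)))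
      Set.univ
      {g : E → E → F | ∃ S : E →ₗ[F] E →ₗ[F] F,
        (∀ x y, S x y = S y x) ∧ ∀ x y, S x y = g x y} := by
  classical
  subst hq
  set ψ := (fun g : Fin n → E => fun x y : E =>
        Algebra.trace F E (g ⟨0, hn⟩ * (x * y)) +
          ∑ i ∈ Finset.univ.filter (fun i : Fin n => (i : ℕ) ≠ 0),
            Algebra.trace F E (g i * (x * y ^ (Fintype.card F) ^ (i : ℕ) +
              x ^ (Fintype.card F) ^ (i : ℕ) * y))) with hψ
  set T := {g : E → E → F | ∃ S : E →ₗ[F] E →ₗ[F] F,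
        (∀ x y, S x y = S y x) ∧ ∀ x y, S x y = g x y} with hT
  have hmapsTo : ∀ g : Fin n → E, ψ g ∈ T := by
    intro g
    obtain ⟨S, h1, h2⟩ := aux_S (F := F) (E := E) n hn g
    exact ⟨S, h1, h2⟩
  have hinj : Function.Injective ψ := by
    intro g1 g2 hg
    have hz := aux_inj n m hn hm hdim (fun i => g1 i - g2 i) ?_
    · funext i
      have := hz i
      simpa [sub_eq_zero] using this
    · intro x y
      have hxy := congrFun (congrFun hg x) y
      simp only [hψ] at hxy
      simp only [sub_mul, map_sub, Finset.sum_sub_distrib]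
      rw [sub_add_sub_comm]
      exact sub_eq_zero_of_eq hxy
  -- counting
  haveI : FiniteDimensional F E := Module.Finite.of_finite
  let b : Module.Basis (Fin m) F E := (Module.finBasis F E).reindex (finCongr hdim)
  let θ : ↥T → (Sym2 (Fin m) → F) := fun gp =>
    Sym2.lift ⟨fun i j => gp.1 (b i) (b j), by
      obtain ⟨S, hsymm, hS⟩ := gp.2
      intro i j
      show (gp : E → E → F) (b i) (b j) = (gp : E → E → F) (b j) (b i)
      rw [← hS, ← hS, hsymm]⟩
  have hθinj : Function.Injective θ := by
    rintro ⟨g1, hg1⟩ ⟨g2, hg2⟩ hθ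
    obtain ⟨S1, hs1, he1⟩ := hg1
    obtain ⟨S2, hs2, he2⟩ := hg2
    have hS : S1 = S2 := by
      refine b.ext fun i => b.ext fun j => ?_
      have := congrFun hθ (Sym2.mk i j)
      simpa [θ, he1, he2] using this
    refine Subtype.ext ?_
    funext x y
    show g1 x y = g2 x y
    rw [← he1 x y, ← he2 x y, hS]
  have hcardE : Fintype.card E = (Fintype.card F) ^ m := by
    rw [Module.card_eq_pow_finrank (K := F) (V := E), hdim]
  have hchoose : Nat.choose (m + 1) 2 = n * m := by
    have h1 : m + 1 = 2 * n := by omega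
    have h2 : 2 * n - 1 = m := by omega
    rw [Nat.choose_two_right, h1, h2, mul_assoc,
      Nat.mul_div_cancel_left _ (by norm_num : 0 < 2)]
  have hcard : Nat.card ↥T = Nat.card (Fin n → E) := by
    apply le_antisymm
    · refine le_trans (Nat.card_le_card_of_injective θ hθinj) ?_
      rw [Nat.card_fun, Nat.card_eq_fintype_card, Nat.card_eq_fintype_card, Sym2.card,
        Fintype.card_fin, hchoose]
      rw [Nat.card_fun, Nat.card_eq_fintype_card, Nat.card_eq_fintype_card, hcardE,
        Fintype.card_fin, ← pow_mul, mul_comm m n]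
    · exact Nat.card_le_card_of_injective (fun g => (⟨ψ g, hmapsTo g⟩ : ↥T))
        (fun g1 g2 hgg => hinj (congrArg Subtype.val hgg))
  have hbij : Function.Bijective (fun g => (⟨ψ g, hmapsTo g⟩ : ↥T)) := by
    rw [Nat.bijective_iff_injective_and_card]
    exact ⟨fun g1 g2 hgg => hinj (congrArg Subtype.val hgg), hcard.symm⟩
  refine ⟨fun g _ => hmapsTo g, fun g1 _ g2 _ hgg => hinj hgg, ?_⟩
  intro t ht
  obtain ⟨g, hg⟩ := hbij.2 ⟨t, ht⟩
  exact ⟨g, Set.mem_univ g, congrArg Subtype.val hg⟩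
end

section
/- Let q be a prime power and let m = 2n be an even positive integer. Then the map sending (f_0, f_1, …, f_{n−1}, f_n) ∈ F_{q^m}^n × F_{q^n} to the function x ↦ Σ_{i=0}^{n−1} Tr_m(f_i·x^{q^i + 1}) + Tr_n(f_n·x^{q^n + 1}) is a bijection from F_{q^m}^n × F_{q^n} onto the set of all quadratic forms on F_{q^m} viewed as an F_q-vector space (note that x^{q^n+1} ∈ F_{q^n} for all x ∈ F_{q^m}); in particular, every quadratic form on F_{q^m} admits a unique such representation. -/
set_option synthInstance.maxHeartbeats 1000000
set_option maxHeartbeats 1000000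

section Aux
variable {F E : Type} [Field F] [Fintype F] [Field E] [Algebra F E]

lemma aux_add_pow_q (x y : E) (t : ℕ) :
    (x + y) ^ Fintype.card F ^ t = x ^ Fintype.card F ^ t + y ^ Fintype.card F ^ t := by
  obtain ⟨p, hp⟩ := CharP.exists F
  haveI : CharP F p := hp
  haveI : CharP E p := charP_of_injective_algebraMap (algebraMap F E).injective p
  obtain ⟨k, hprime, hcard⟩ := FiniteField.card F p
  haveI : Fact p.Prime := ⟨hprime⟩
  rw [hcard, ← pow_mul]
  exact add_pow_char_pow x y p (k * t)

lemma aux_algebraMap_pow_q (a : F) (t : ℕ) :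
    (algebraMap F E a) ^ Fintype.card F ^ t = algebraMap F E a := by
  rw [← map_pow, FiniteField.pow_card_pow]

end Aux

/-- reduced exponent -/
def redE (N e : ℕ) : ℕ := (e - 1) % N + 1

lemma redE_id {N e : ℕ} (h1 : 1 ≤ e) (h2 : e ≤ N) : redE N e = e := by
  unfold redE
  have : e - 1 < N := by omega
  rw [Nat.mod_eq_of_lt this]; omega

lemma redE_shift (N s t : ℕ) (ht : 1 ≤ t) : redE N (t + s * N) = redE N t := by
  unfold redE
  have h : t + s * N - 1 = (t - 1) + s * N := by omega
  rw [h, Nat.add_mul_mod_self_right]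

lemma digit_lemma {q a b c : ℕ} (hq : 2 ≤ q) (hba : b ≤ a)
    (h : q ^ a + q ^ b = q ^ c + 1) : b = 0 ∧ a = c := by
  have hpow : ∀ t : ℕ, 1 ≤ q ^ t := fun t => Nat.one_le_pow _ _ (by omega)
  rcases Nat.eq_zero_or_pos b with hb | hb
  · subst hb
    simp only [pow_zero] at h
    have : q ^ a = q ^ c := by omega
    exact ⟨rfl, Nat.pow_right_injective hq this⟩
  · exfalso
    have hdvd : q ∣ q ^ a + q ^ b :=
      Nat.dvd_add (dvd_pow_self q (by omega)) (dvd_pow_self q (by omega))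
    rcases Nat.eq_zero_or_pos c with hc | hc
    · subst hc
      simp only [pow_zero] at h
      have h2 : 2 ≤ q ^ b := by
        calc 2 ≤ q := hq
        _ = q ^ 1 := (pow_one q).symm
        _ ≤ q ^ b := Nat.pow_le_pow_right (by omega) hb
      have h3 : 2 ≤ q ^ a := le_trans h2 (Nat.pow_le_pow_right (by omega) hba)
      omega
    · rw [h] at hdvd
      have : q ∣ 1 := (Nat.dvd_add_right (dvd_pow_self q (by omega))).mp hdvd
      have := Nat.le_of_dvd one_pos this
      omega

lemma sum_pow_le {q a b m : ℕ} (hq : 2 ≤ q) (hb : b < a) (ha : a ≤ m - 1) (hm : 2 ≤ m) :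
    q ^ a + q ^ b ≤ q ^ m - 1 := by
  have h1 : q ^ a ≤ q ^ (m - 1) := Nat.pow_le_pow_right (by omega) ha
  have h2 : q ^ b ≤ q ^ (m - 2) := Nat.pow_le_pow_right (by omega) (by omega)
  have h3 : q ^ (m - 1) + q ^ (m - 2) + 1 ≤ q ^ m := by
    have e1 : q ^ m = q ^ (m - 2) * q ^ 2 := by rw [← pow_add]; congr 1; omega
    have e2 : q ^ (m - 1) = q ^ (m - 2) * q := by rw [← pow_succ]; congr 1; omega
    have h4 : 1 ≤ q ^ (m - 2) := Nat.one_le_pow _ _ (by omega)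
    have h5 : q + 2 ≤ q ^ 2 := by nlinarith
    calc q ^ (m - 1) + q ^ (m - 2) + 1 ≤ q ^ (m - 2) * q + q ^ (m - 2) + q ^ (m - 2) := by
          omega
    _ = q ^ (m - 2) * (q + 2) := by ring
    _ ≤ q ^ (m - 2) * q ^ 2 := Nat.mul_le_mul_left _ h5
    _ = q ^ m := e1.symm
  omega

/-- The key uniqueness of exponents lemma. -/
lemma exp_unique {q n m i i' j' : ℕ} (hq : 2 ≤ q) (hn : 1 ≤ n) (hm : m = 2 * n)
    (hi : i ≤ n) (hi' : i' ≤ n) (hj' : j' < m) (hin' : i' = n → j' < n)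
    (h : redE (q ^ m - 1) ((q ^ i' + 1) * q ^ j') = q ^ i + 1) : i' = i ∧ j' = 0 := by
  have hpow : ∀ t : ℕ, 1 ≤ q ^ t := fun t => Nat.one_le_pow _ _ (by omega)
  have hm2 : 2 ≤ m := by omega
  have he : (q ^ i' + 1) * q ^ j' = q ^ (i' + j') + q ^ j' := by
    rw [add_mul, one_mul, ← pow_add]
  rw [he] at h
  set N := q ^ m - 1 with hN
  have hNq : q ^ m = N + 1 := by
    have := hpow m; omega
  rcases Nat.lt_or_ge (i' + j') m with hA | hB
  · -- case A : no wrap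
    rcases Nat.lt_or_ge N (q ^ (i' + j') + q ^ j') with hbig | hle
    · -- e > N forces e = q^m, red = 1, contradiction
      exfalso
      have hub : q ^ (i' + j') + q ^ j' ≤ q ^ m := by
        calc q ^ (i' + j') + q ^ j' ≤ q ^ (m-1) + q ^ (m-1) :=
              Nat.add_le_add (Nat.pow_le_pow_right (by omega) (by omega))
                (Nat.pow_le_pow_right (by omega) (by omega))
        _ ≤ q ^ m := by
              have : q ^ (m-1) * 2 ≤ q ^ (m-1) * q := Nat.mul_le_mul_left _ hq
              have e2 : q ^ m = q ^ (m - 1) * q := by rw [← pow_succ]; congr 1; omega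
              omega
      have heq : q ^ (i' + j') + q ^ j' = q ^ m := by omega
      rw [heq, hNq] at h
      have : redE N (N + 1) = 1 := by
        have : N + 1 = 1 + 1 * N := by omega
        rw [this, redE_shift N 1 1 (by omega)]
        unfold redE
        simp
      rw [this] at h
      have := hpow i
      omega
    · rw [redE_id (by have := hpow j'; omega) hle] at h
      obtain ⟨hb0, hac⟩ := digit_lemma hq (Nat.le_add_left _ _ : j' ≤ i' + j') h
      subst hb0
      omega
  · -- case B : wrap around
    exfalso
    have hi'n : i' < n := by
      rcases Nat.lt_or_ge i' n with h1 | h1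
      · exact h1
      · have : i' = n := by omega
        have := hin' this
        omega
    set r := i' + j' - m with hr
    have hrj : r < j' := by omega
    have hjm : j' ≤ m - 1 := by omega
    have hsplit : q ^ (i' + j') + q ^ j' = (q ^ j' + q ^ r) + q ^ r * N := by
      have : i' + j' = r + m := by omega
      rw [this, pow_add, hNq]
      ring
    rw [hsplit, redE_shift N _ _ (by have := hpow j'; omega)] at h
    have hle : q ^ j' + q ^ r ≤ N := sum_pow_le hq hrj hjm hm2
    rw [redE_id (by have := hpow j'; omega) hle] at h
    obtain ⟨hb0, hac⟩ := digit_lemma hq (le_of_lt hrj) h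
    -- r = 0 and j' = i; then j' ≥ n and j' = i ≤ n give j' = n, i' = n
    have : j' ≥ n := by omega
    omega

lemma aux_pow_red {E : Type} [Field E] [Fintype E] (x : E) (e : ℕ) (he : 1 ≤ e) :
    x ^ e = x ^ redE (Fintype.card E - 1) e := by
  set N := Fintype.card E - 1 with hN
  have hcard : 2 ≤ Fintype.card E := Fintype.one_lt_card
  by_cases hx : x = 0
  · subst hx
    rw [zero_pow (by omega), zero_pow (by unfold redE; omega)]
  · have h1 : x ^ N = 1 := FiniteField.pow_card_sub_one_eq_one x hx
    have hsplit : e = N * ((e - 1) / N) + (redE N e) := by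
      unfold redE
      have := Nat.div_add_mod (e - 1) N
      omega
    conv_lhs => rw [hsplit]
    rw [pow_add, pow_mul, h1, one_pow, one_mul]
open Polynomial in
lemma aux_trace_formula {F E : Type} [Field F] [Fintype F] [Field E] [Fintype E] [Algebra F E]
    (d : ℕ) (hd : Module.finrank F E = d) (x : E) :
    algebraMap F E (Algebra.trace F E x) = ∑ j ∈ Finset.range d, x ^ Fintype.card F ^ j := by
  classical
  haveI : FiniteDimensional F E := Module.Finite.of_finite
  set q := Fintype.card F with hq
  have hq2 : 2 ≤ q := Fintype.one_lt_card
  obtain ⟨p, hp⟩ := CharP.exists F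
  haveI : CharP F p := hp
  haveI : CharP E p := charP_of_injective_algebraMap (algebraMap F E).injective p
  obtain ⟨k, hprime, hcard⟩ := FiniteField.card F p
  haveI : Fact p.Prime := ⟨hprime⟩
  let φ0 : E →ₐ[F] E :=
    { toRingHom := iterateFrobenius E p k
      commutes' := fun a => by
        show iterateFrobenius E p k (algebraMap F E a) = algebraMap F E a
        rw [iterateFrobenius_def, ← hcard, ← map_pow, FiniteField.pow_card] }
  have hφ0 : ∀ y : E, φ0 y = y ^ q := fun y => by
    show iterateFrobenius E p k y = y ^ q
    rw [iterateFrobenius_def, hq, hcard]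
  let φ : E ≃ₐ[F] E := AlgEquiv.ofBijective φ0
    ((Finite.injective_iff_bijective).mp (φ0.toRingHom.injective))
  have hφpow : ∀ (j : ℕ) (y : E), (φ ^ j) y = y ^ q ^ j := by
    intro j
    induction j with
    | zero => intro y; simp
    | succ j ih =>
      intro y
      rw [pow_succ, AlgEquiv.mul_apply, ih (φ y)]
      have hy : φ y = y ^ q := hφ0 y
      rw [hy, ← pow_mul, ← pow_succ']
  -- the powers of φ are distinct
  have hcardE : Fintype.card E = q ^ d := by rw [← hd]; exact Module.card_eq_pow_finrank
  have key : ∀ j₁ j₂ : Fin d, (j₁ : ℕ) < (j₂ : ℕ) → φ ^ (j₁:ℕ) = φ ^ (j₂:ℕ) → False := by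
    intro j₁ j₂ hlt hjj
    have heval : ∀ y : E, ((X : E[X]) ^ q ^ (j₂:ℕ) - X ^ q ^ (j₁:ℕ)).eval y = 0 := by
      intro y
      have := congrArg (fun σ : E ≃ₐ[F] E => σ y) hjj
      simp only [hφpow] at this
      simp [this]
    have hPz : ((X : E[X]) ^ q ^ (j₂:ℕ) - X ^ q ^ (j₁:ℕ)) = 0 := by
      apply Polynomial.eq_zero_of_forall_eval_zero_of_natDegree_lt_card _ heval
      have h1 : ((X : E[X]) ^ q ^ (j₂:ℕ) - X ^ q ^ (j₁:ℕ)).natDegree ≤ q ^ (j₂:ℕ) := by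
        refine le_trans (Polynomial.natDegree_sub_le _ _) ?_
        simp [Polynomial.natDegree_X_pow]
        exact Nat.pow_le_pow_right (by omega) (le_of_lt hlt)
      have h2 : q ^ (j₂:ℕ) < Fintype.card E := by
        rw [hcardE]; exact Nat.pow_lt_pow_right (by omega) j₂.2
      simp only [Cardinal.mk_fintype]
      exact_mod_cast lt_of_le_of_lt h1 h2
    have : ((X : E[X]) ^ q ^ (j₂:ℕ) - X ^ q ^ (j₁:ℕ)).coeff (q ^ (j₂:ℕ)) = 1 := by
      rw [Polynomial.coeff_sub, Polynomial.coeff_X_pow, Polynomial.coeff_X_pow]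
      have : q ^ (j₁:ℕ) ≠ q ^ (j₂:ℕ) := by
        exact Nat.ne_of_lt (Nat.pow_lt_pow_right (by omega) hlt)
      simp [this.symm]
    rw [hPz] at this
    simp at this
  have hinj : Function.Injective (fun j : Fin d => φ ^ (j : ℕ)) := by
    intro j₁ j₂ hjj
    rcases Nat.lt_trichotomy (j₁:ℕ) (j₂:ℕ) with h | h | h
    · exact absurd hjj (fun hh => key j₁ j₂ h hh)
    · exact Fin.ext h
    · exact absurd hjj.symm (fun hh => key j₂ j₁ h hh)
  have hbij : Function.Bijective (fun j : Fin d => φ ^ (j : ℕ)) := by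
    apply (Fintype.bijective_iff_injective_and_card _).mpr
    refine ⟨hinj, ?_⟩
    rw [Fintype.card_fin, ← Nat.card_eq_fintype_card, IsGalois.card_aut_eq_finrank, hd]
  rw [trace_eq_sum_automorphisms]
  rw [← Fintype.sum_bijective _ hbij (fun j : Fin d => x ^ q ^ (j:ℕ)) (fun σ => σ x)
    (fun j => (hφpow (j:ℕ) x).symm)]
  exact (Finset.sum_range fun j => x ^ q ^ j).symm

lemma redE_le {N : ℕ} (hN : 1 ≤ N) (e : ℕ) : redE N e ≤ N := by
  unfold redE
  have := Nat.mod_lt (e - 1) (show 0 < N by omega)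
  omega

lemma aux_kernel (F E : Type) [Field F] [Fintype F] [Field E] [Fintype E] [Algebra F E]
    (q : ℕ) (hq : q = Fintype.card F)
    (n m : ℕ) (hn : 1 ≤ n) (hm : m = 2 * n)
    (hdim : Module.finrank F E = m)
    (K : Subalgebra F E) (hKdim : Module.finrank F K = n)
    (hKmem : ∀ x : E, x ^ (q ^ n + 1) ∈ K)
    (f : Fin n → E) (c : K)
    (h : ∀ x : E, (∑ i : Fin n, Algebra.trace F E (f i * x ^ (q ^ (i : ℕ) + 1))) +
        Algebra.trace F K (c * ⟨x ^ (q ^ n + 1), hKmem x⟩) = 0) :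
    f = 0 ∧ c = 0 := by
  classical
  have hq2 : 2 ≤ q := by rw [hq]; exact Fintype.one_lt_card
  have hpow : ∀ t : ℕ, 1 ≤ q ^ t := fun t => Nat.one_le_pow _ _ (by omega)
  have hcardE : Fintype.card E = q ^ m := by rw [← hdim, hq]; exact Module.card_eq_pow_finrank
  haveI : Fintype K := Fintype.ofFinite K
  letI : Field K := Fintype.fieldOfDomain K
  set N : ℕ := q ^ m - 1 with hN
  have hN1 : 1 ≤ N := by have := hpow m; have : 4 ≤ q ^ m := by
                           calc 4 = 2 ^ 2 := rfl
                           _ ≤ q ^ 2 := Nat.pow_le_pow_left hq2 2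
                           _ ≤ q ^ m := Nat.pow_le_pow_right (by omega) (by omega)
                         omega
  -- trace formulas
  have htrE : ∀ x : E, algebraMap F E (Algebra.trace F E x) = ∑ j ∈ Finset.range m, x ^ q ^ j := by
    intro x
    have := aux_trace_formula m hdim x
    rwa [← hq] at this
  have htrK : ∀ z : K, algebraMap F E (Algebra.trace F K z)
      = ∑ j ∈ Finset.range n, (z : E) ^ q ^ j := by
    intro z
    have h0 := aux_trace_formula n hKdim z
    rw [← hq] at h0
    have h1 := congrArg (Subalgebra.val K) h0
    simp only [map_sum, map_pow] at h1
    rw [IsScalarTower.algebraMap_apply F K E]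
    exact h1
  -- the polynomial
  set P : Polynomial E :=
      (∑ i : Fin n, ∑ j ∈ Finset.range m,
        Polynomial.C ((f i) ^ q ^ j) * Polynomial.X ^ (redE N ((q ^ (i : ℕ) + 1) * q ^ j)))
      + ∑ j ∈ Finset.range n,
        Polynomial.C (((c : E)) ^ q ^ j) * Polynomial.X ^ (redE N ((q ^ n + 1) * q ^ j))
    with hP
  have hNE : N = Fintype.card E - 1 := by rw [hcardE]
  have heval : ∀ x : E, P.eval x = 0 := by
    intro x
    have hterm : ∀ (i : ℕ) (j : ℕ), i ≤ n →
        (f' : E) → f' ^ q ^ j * x ^ (redE N ((q ^ i + 1) * q ^ j)) = (f' * x ^ (q ^ i + 1)) ^ q ^ j := by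
      intro i j hi f'
      have hred := aux_pow_red x ((q ^ i + 1) * q ^ j) (Nat.one_le_iff_ne_zero.mpr (by positivity))
      rw [← hNE] at hred
      rw [← hred, pow_mul, mul_pow]
    have h1 : ∀ i : Fin n, ∑ j ∈ Finset.range m, f i ^ q ^ j * x ^ redE N ((q ^ (i:ℕ) + 1) * q ^ j)
        = algebraMap F E (Algebra.trace F E (f i * x ^ (q ^ (i:ℕ) + 1))) := by
      intro i
      rw [htrE]
      exact Finset.sum_congr rfl fun j _ => hterm (i:ℕ) j (le_of_lt i.2) (f i)
    have h2 : ∑ j ∈ Finset.range n, (c:E) ^ q ^ j * x ^ redE N ((q ^ n + 1) * q ^ j)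
        = algebraMap F E (Algebra.trace F K (c * ⟨x ^ (q ^ n + 1), hKmem x⟩)) := by
      rw [htrK]
      have hco : ((c * ⟨x ^ (q ^ n + 1), hKmem x⟩ : K) : E) = (c:E) * x ^ (q ^ n + 1) := by
        push_cast
        ring
      rw [hco]
      exact Finset.sum_congr rfl fun j _ => hterm n j le_rfl (c:E)
    rw [hP]
    simp only [Polynomial.eval_add, Polynomial.eval_finset_sum, Polynomial.eval_mul,
      Polynomial.eval_pow, Polynomial.eval_C, Polynomial.eval_X]
    calc (∑ i : Fin n, ∑ j ∈ Finset.range m, f i ^ q ^ j * x ^ redE N ((q ^ (i:ℕ) + 1) * q ^ j))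
        + ∑ j ∈ Finset.range n, (c:E) ^ q ^ j * x ^ redE N ((q ^ n + 1) * q ^ j)
        = (∑ i : Fin n, algebraMap F E (Algebra.trace F E (f i * x ^ (q ^ (i:ℕ) + 1))))
          + algebraMap F E (Algebra.trace F K (c * ⟨x ^ (q ^ n + 1), hKmem x⟩)) := by
          rw [h2]
          congr 1
          exact Finset.sum_congr rfl fun i _ => h1 i
    _ = algebraMap F E ((∑ i : Fin n, Algebra.trace F E (f i * x ^ (q ^ (i:ℕ) + 1)))
          + Algebra.trace F K (c * ⟨x ^ (q ^ n + 1), hKmem x⟩)) := by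
          rw [map_add, map_sum]
    _ = 0 := by rw [h x, map_zero]
  -- degree bound and vanishing
  have hPz : P = 0 := by
    apply Polynomial.eq_zero_of_forall_eval_zero_of_natDegree_lt_card _ heval
    have hdle : P.natDegree ≤ N := by
      rw [hP]
      refine le_trans (Polynomial.natDegree_add_le _ _) (max_le ?_ ?_)
      · refine Polynomial.natDegree_sum_le_of_forall_le _ _ fun i _ => ?_
        refine Polynomial.natDegree_sum_le_of_forall_le _ _ fun j _ => ?_
        exact le_trans (Polynomial.natDegree_C_mul_X_pow_le _ _) (redE_le hN1 _)
      · refine Polynomial.natDegree_sum_le_of_forall_le _ _ fun j _ => ?_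
        exact le_trans (Polynomial.natDegree_C_mul_X_pow_le _ _) (redE_le hN1 _)
    have : P.natDegree < Fintype.card E := by
      rw [hcardE]
      have := hpow m
      omega
    simp only [Cardinal.mk_fintype]
    exact_mod_cast this
  -- coefficient extraction
  have hcoeff : ∀ t : ℕ,
      (∑ i : Fin n, ∑ j ∈ Finset.range m,
        (if t = redE N ((q ^ (i:ℕ) + 1) * q ^ j) then f i ^ q ^ j else 0))
      + ∑ j ∈ Finset.range n,
        (if t = redE N ((q ^ n + 1) * q ^ j) then (c:E) ^ q ^ j else 0) = 0 := by
    intro t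
    have h0 : P.coeff t = 0 := by rw [hPz]; simp
    rw [hP] at h0
    simpa only [Polynomial.coeff_add, Polynomial.finset_sum_coeff, Polynomial.coeff_C_mul,
      Polynomial.coeff_X_pow, mul_ite, mul_one, mul_zero] using h0
  have htarget : ∀ i, i ≤ n → redE N ((q ^ i + 1) * q ^ 0) = q ^ i + 1 := by
    intro i hi
    rw [pow_zero, mul_one]
    apply redE_id (by have := hpow i; omega)
    have h1 : q ^ i ≤ q ^ n := Nat.pow_le_pow_right (by omega) hi
    have h2 : q ^ n * q ^ n = q ^ m := by rw [← pow_add]; congr 1; omega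
    have h3 : 2 ≤ q ^ n := by
      calc 2 ≤ q := hq2
      _ = q ^ 1 := (pow_one q).symm
      _ ≤ q ^ n := Nat.pow_le_pow_right (by omega) hn
    have h4 : 2 * q ^ n ≤ q ^ n * q ^ n := Nat.mul_le_mul_right _ h3
    omega
  constructor
  · funext i0
    have h0 := hcoeff (q ^ (i0:ℕ) + 1)
    have hi0n : (i0:ℕ) ≤ n := le_of_lt i0.2
    have hsec : (∑ j ∈ Finset.range n,
        (if q ^ (i0:ℕ) + 1 = redE N ((q ^ n + 1) * q ^ j) then (c:E) ^ q ^ j else 0)) = 0 := by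
      refine Finset.sum_eq_zero fun j hj => ?_
      rw [if_neg]
      intro hc
      have hjn := Finset.mem_range.mp hj
      have := exp_unique hq2 hn hm hi0n le_rfl (by omega) (fun _ => hjn) hc.symm
      omega
    have hfirst : (∑ i : Fin n, ∑ j ∈ Finset.range m,
        (if q ^ (i0:ℕ) + 1 = redE N ((q ^ (i:ℕ) + 1) * q ^ j) then f i ^ q ^ j else 0)) = f i0 := by
      rw [Finset.sum_eq_single i0]
      · rw [Finset.sum_eq_single_of_mem 0 (Finset.mem_range.mpr (by omega))]
        · rw [if_pos (htarget (i0:ℕ) hi0n).symm, pow_zero, pow_one]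
        · intro j hj hjne
          rw [if_neg]
          intro hc
          have := exp_unique hq2 hn hm hi0n hi0n (Finset.mem_range.mp hj)
            (fun hh => absurd hh (by omega)) hc.symm
          omega
      · intro i _ hine
        refine Finset.sum_eq_zero fun j hj => ?_
        rw [if_neg]
        intro hc
        have := exp_unique hq2 hn hm hi0n (le_of_lt i.2)
          (Finset.mem_range.mp hj) (fun hh => absurd hh (by omega)) hc.symm
        exact hine (Fin.ext (by omega))
      · intro hni
        exact absurd (Finset.mem_univ i0) hni
    rw [hfirst, hsec, add_zero] at h0
    simpa using h0
  · have h0 := hcoeff (q ^ n + 1)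
    have hfirst : (∑ i : Fin n, ∑ j ∈ Finset.range m,
        (if q ^ n + 1 = redE N ((q ^ (i:ℕ) + 1) * q ^ j) then f i ^ q ^ j else 0)) = 0 := by
      refine Finset.sum_eq_zero fun i _ => Finset.sum_eq_zero fun j hj => ?_
      rw [if_neg]
      intro hc
      have hi2 := i.2
      have := exp_unique hq2 hn hm le_rfl (le_of_lt i.2)
        (Finset.mem_range.mp hj) (fun hh => absurd hh (by omega)) hc.symm
      omega
    have hsec : (∑ j ∈ Finset.range n,
        (if q ^ n + 1 = redE N ((q ^ n + 1) * q ^ j) then (c:E) ^ q ^ j else 0)) = (c:E) := by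
      rw [Finset.sum_eq_single_of_mem 0 (Finset.mem_range.mpr (by omega))]
      · rw [if_pos (htarget n le_rfl).symm, pow_zero, pow_one]
      · intro j hj hjne
        rw [if_neg]
        intro hc
        have hjn := Finset.mem_range.mp hj
        have := exp_unique hq2 hn hm le_rfl le_rfl (by omega) (fun _ => hjn) hc.symm
        omega
    rw [hfirst, hsec, zero_add] at h0
    exact Subtype.ext (by simpa using h0)


section
variable {F E : Type} [Field F] [Fintype F] [Field E] [Algebra F E]

/-- The binomial identity for `q`-power-plus-one exponents. -/
lemma aux_binom (x y : E) (t : ℕ) :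
    (x + y) ^ (Fintype.card F ^ t + 1) = x ^ (Fintype.card F ^ t + 1) + y ^ (Fintype.card F ^ t + 1)
      + (x * y ^ Fintype.card F ^ t + x ^ Fintype.card F ^ t * y) := by
  rw [pow_succ (x + y), pow_succ x, pow_succ y, aux_add_pow_q x y t]
  ring

lemma aux_smul_pow (a : F) (x : E) (t : ℕ) :
    (a • x) ^ Fintype.card F ^ t = a • x ^ Fintype.card F ^ t := by
  rw [Algebra.smul_def, Algebra.smul_def, mul_pow, aux_algebraMap_pow_q a t]

lemma aux_is_quadratic_form
    (q : ℕ) (hq : q = Fintype.card F) (n : ℕ)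
    (K : Subalgebra F E) (hKmem : ∀ x : E, x ^ (q ^ n + 1) ∈ K)
    (f : Fin n → E) (c : K) :
    ∃ Q : QuadraticForm F E, ⇑Q = fun x : E =>
      (∑ i : Fin n, Algebra.trace F E (f i * x ^ (q ^ (i : ℕ) + 1))) +
        Algebra.trace F K (c * ⟨x ^ (q ^ n + 1), hKmem x⟩) := by
  subst hq
  set q := Fintype.card F with hq
  -- membership of the mixed term
  have hmemB : ∀ x y : E, x * y ^ q ^ n + x ^ q ^ n * y ∈ K := by
    intro x y
    have h := aux_binom (F := F) x y n
    have h2 : x * y ^ q ^ n + x ^ q ^ n * y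
        = (x + y) ^ (q ^ n + 1) - x ^ (q ^ n + 1) - y ^ (q ^ n + 1) := by
      rw [h]; ring
    rw [h2]
    exact sub_mem (sub_mem (hKmem _) (hKmem _)) (hKmem _)
  -- the candidate polar form, as a plain function
  set Bf : E → E → F := fun x y =>
    (∑ i : Fin n, Algebra.trace F E (f i * (x * y ^ q ^ (i:ℕ) + x ^ q ^ (i:ℕ) * y))) +
      Algebra.trace F K (c * ⟨x * y ^ q ^ n + x ^ q ^ n * y, hmemB x y⟩) with hBf
  set g : E → F := fun x =>
    (∑ i : Fin n, Algebra.trace F E (f i * x ^ (q ^ (i : ℕ) + 1))) +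
      Algebra.trace F K (c * ⟨x ^ (q ^ n + 1), hKmem x⟩) with hg
  have hcompanion : ∀ x y : E, g (x + y) = g x + g y + Bf x y := by
    intro x y
    simp only [hg, hBf]
    have hK1 : (⟨(x + y) ^ (q ^ n + 1), hKmem (x+y)⟩ : K)
        = ⟨x ^ (q ^ n + 1), hKmem x⟩ + ⟨y ^ (q ^ n + 1), hKmem y⟩
          + ⟨x * y ^ q ^ n + x ^ q ^ n * y, hmemB x y⟩ := by
      ext
      push_cast
      rw [aux_binom (F := F) x y n]
    rw [hK1]
    rw [mul_add, mul_add, map_add, map_add]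
    have hE1 : ∀ i : Fin n, Algebra.trace F E (f i * (x + y) ^ (q ^ (i:ℕ) + 1))
        = Algebra.trace F E (f i * x ^ (q ^ (i:ℕ) + 1))
          + Algebra.trace F E (f i * y ^ (q ^ (i:ℕ) + 1))
          + Algebra.trace F E (f i * (x * y ^ q ^ (i:ℕ) + x ^ q ^ (i:ℕ) * y)) := by
      intro i
      rw [aux_binom (F := F) x y (i:ℕ), mul_add, mul_add, map_add, map_add]
    simp only [hE1]
    rw [Finset.sum_add_distrib, Finset.sum_add_distrib]
    ring
  have hBsymm : ∀ x y : E, Bf x y = Bf y x := by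
    intro x y
    simp only [hBf]
    congr 1
    · refine Finset.sum_congr rfl fun i _ => ?_
      congr 1
      ring
    · congr 1
      ext
      push_cast
      ring
  have hBaddl : ∀ x x' y : E, Bf (x + x') y = Bf x y + Bf x' y := by
    intro x x' y
    simp only [hBf]
    have hK1 : (⟨(x + x') * y ^ q ^ n + (x + x') ^ q ^ n * y, hmemB (x+x') y⟩ : K)
        = ⟨x * y ^ q ^ n + x ^ q ^ n * y, hmemB x y⟩
          + ⟨x' * y ^ q ^ n + x' ^ q ^ n * y, hmemB x' y⟩ := by
      ext
      push_cast
      rw [aux_add_pow_q (F := F) x x' n]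
      ring
    rw [hK1, mul_add, map_add]
    have hE1 : ∀ i : Fin n, Algebra.trace F E (f i * ((x + x') * y ^ q ^ (i:ℕ) + (x + x') ^ q ^ (i:ℕ) * y))
        = Algebra.trace F E (f i * (x * y ^ q ^ (i:ℕ) + x ^ q ^ (i:ℕ) * y))
          + Algebra.trace F E (f i * (x' * y ^ q ^ (i:ℕ) + x' ^ q ^ (i:ℕ) * y)) := by
      intro i
      rw [aux_add_pow_q (F := F) x x' (i:ℕ)]
      rw [show f i * ((x + x') * y ^ q ^ (i:ℕ) + (x ^ q ^ (i:ℕ) + x' ^ q ^ (i:ℕ)) * y)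
          = f i * (x * y ^ q ^ (i:ℕ) + x ^ q ^ (i:ℕ) * y)
            + f i * (x' * y ^ q ^ (i:ℕ) + x' ^ q ^ (i:ℕ) * y) by ring, map_add]
    simp only [hE1]
    rw [Finset.sum_add_distrib]
    ring
  have hBsmull : ∀ (a : F) (x y : E), Bf (a • x) y = a * Bf x y := by
    intro a x y
    simp only [hBf]
    have hK1 : (⟨(a • x) * y ^ q ^ n + (a • x) ^ q ^ n * y, hmemB (a • x) y⟩ : K)
        = a • ⟨x * y ^ q ^ n + x ^ q ^ n * y, hmemB x y⟩ := by
      ext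
      push_cast
      rw [aux_smul_pow (F := F) a x n]
      simp only [Algebra.smul_def]
      ring
    rw [hK1, mul_smul_comm, map_smul]
    have hE1 : ∀ i : Fin n, Algebra.trace F E (f i * ((a • x) * y ^ q ^ (i:ℕ) + (a • x) ^ q ^ (i:ℕ) * y))
        = a • Algebra.trace F E (f i * (x * y ^ q ^ (i:ℕ) + x ^ q ^ (i:ℕ) * y)) := by
      intro i
      rw [← map_smul]
      congr 1
      rw [aux_smul_pow (F := F) a x (i:ℕ)]
      simp only [Algebra.smul_def]
      ring
    simp only [hE1]
    rw [← Finset.smul_sum]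
    simp [smul_eq_mul, mul_add]
  have hQsmul : ∀ (a : F) (x : E), g (a • x) = (a * a) • g x := by
    intro a x
    simp only [hg]
    have hK1 : (⟨(a • x) ^ (q ^ n + 1), hKmem (a • x)⟩ : K)
        = (a * a) • ⟨x ^ (q ^ n + 1), hKmem x⟩ := by
      ext
      push_cast
      rw [pow_succ, aux_smul_pow (F := F) a x n]
      simp only [Algebra.smul_def, map_mul]
      rw [pow_succ]
      ring
    rw [hK1, mul_smul_comm, map_smul]
    have hE1 : ∀ i : Fin n, Algebra.trace F E (f i * (a • x) ^ (q ^ (i:ℕ) + 1))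
        = (a * a) • Algebra.trace F E (f i * x ^ (q ^ (i:ℕ) + 1)) := by
      intro i
      rw [← map_smul]
      congr 1
      rw [pow_succ, aux_smul_pow (F := F) a x (i:ℕ)]
      simp only [Algebra.smul_def, map_mul]
      rw [pow_succ]
      ring
    simp only [hE1]
    rw [← Finset.smul_sum]
    simp [smul_eq_mul, mul_add]
  refine ⟨⟨g, hQsmul, ?_⟩, rfl⟩
  have hBsmull' : ∀ (a : F) (x y : E), Bf (a • x) y = a • Bf x y := by
    intro a x y
    rw [hBsmull, smul_eq_mul]
  refine ⟨LinearMap.mk₂ F Bf hBaddl hBsmull'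
    (fun x y y' => by rw [hBsymm x (y + y'), hBaddl, hBsymm y x, hBsymm y' x])
    (fun a x y => by rw [hBsymm x (a • y), hBsmull', hBsymm y x]), ?_⟩
  intro x y
  rw [hcompanion x y]
  rfl


lemma aux_qf_determined (F E : Type) [Field F] [AddCommGroup E] [Module F E]
    (d : ℕ) (b : Module.Basis (Fin d) F E) (Q1 Q2 : QuadraticForm F E)
    (h1 : ∀ i, Q1 (b i) = Q2 (b i))
    (h2 : ∀ i j : Fin d, i ≠ j →
      QuadraticMap.polar ⇑Q1 (b i) (b j) = QuadraticMap.polar ⇑Q2 (b i) (b j))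
    (x : E) : Q1 x = Q2 x := by
  classical
  have key : ∀ cv : Fin d → F, Q1 (∑ i, cv i • b i) = Q2 (∑ i, cv i • b i) := by
    intro cv
    rw [QuadraticMap.map_sum, QuadraticMap.map_sum]
    congr 1
    · refine Finset.sum_congr rfl fun i _ => ?_
      rw [QuadraticMap.map_smul, QuadraticMap.map_smul, h1 i]
    · refine Finset.sum_congr rfl fun z hz => ?_
      simp only [Finset.mem_filter] at hz
      obtain ⟨-, hz2⟩ := hz
      induction z using Sym2.inductionOn with
      | hf i j =>
        have hij : i ≠ j := by
          simpa [Sym2.isDiag_iff_proj_eq] using hz2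
        simp only [Sym2.map_mk, QuadraticMap.polarSym2_sym2Mk]
        rw [QuadraticMap.polar_smul_left, QuadraticMap.polar_smul_right,
          QuadraticMap.polar_smul_left, QuadraticMap.polar_smul_right, h2 i j hij]
  rw [← b.sum_repr x]
  exact key _


open scoped BigOperators

/-- **Theorem (canonical representation of quadratic forms, even extension degree).**
For `m = 2n`, with `K` the subfield `F_{q^n}` of `E = F_{q^m}` (note that `x^{q^n+1} ∈ K`
for all `x ∈ E`, which is recorded by the hypothesis `hKmem`), the map
`(f_0, …, f_{n-1}, f_n) ↦ (x ↦ ∑_{i<n} Tr_m (f_i x^{q^i+1}) + Tr_n (f_n x^{q^n+1}))`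
is a bijection from `F_{q^m}^n × F_{q^n}` onto the set of all quadratic forms on `E`
viewed as an `F_q`-vector space. -/
theorem canonical_representation_of_quadratic_forms_even_degree
    (F E : Type) [Field F] [Fintype F] [Field E] [Fintype E] [Algebra F E]
    (q : ℕ) (hq : q = Fintype.card F)
    (n m : ℕ) (hn : 1 ≤ n) (hm : m = 2 * n)
    (hdim : Module.finrank F E = m)
    (K : Subalgebra F E) (hKdim : Module.finrank F K = n)
    (hKmem : ∀ x : E, x ^ (q ^ n + 1) ∈ K) :
    Set.BijOn
      (fun fc : (Fin n → E) × K => fun x : E =>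
        (∑ i : Fin n, Algebra.trace F E (fc.1 i * x ^ (q ^ (i : ℕ) + 1))) +
          Algebra.trace F K (fc.2 * ⟨x ^ (q ^ n + 1), hKmem x⟩))
      Set.univ
      {g : E → F | ∃ Q : QuadraticForm F E, ⇑Q = g} := by
  classical
  haveI : Fintype K := Fintype.ofFinite K
  have hq2 : 2 ≤ q := by rw [hq]; exact Fintype.one_lt_card
  have hcardE : Fintype.card E = q ^ m := by rw [← hdim, hq]; exact Module.card_eq_pow_finrank
  have hcardK : Fintype.card K = q ^ n := by rw [← hKdim, hq]; exact Module.card_eq_pow_finrank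
  set Φ : ((Fin n → E) × K) → (E → F) := fun fc => fun x : E =>
      (∑ i : Fin n, Algebra.trace F E (fc.1 i * x ^ (q ^ (i : ℕ) + 1))) +
        Algebra.trace F K (fc.2 * ⟨x ^ (q ^ n + 1), hKmem x⟩) with hΦ
  set T : Set (E → F) := {g : E → F | ∃ Q : QuadraticForm F E, ⇑Q = g} with hT
  have hmaps : Set.MapsTo Φ Set.univ T := by
    intro fc _
    exact aux_is_quadratic_form q hq n K hKmem fc.1 fc.2
  have hinj : Set.InjOn Φ Set.univ := by
    rintro ⟨f1, c1⟩ - ⟨f2, c2⟩ - hfe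
    have hker := aux_kernel F E q hq n m hn hm hdim K hKdim hKmem (f1 - f2) (c1 - c2) ?_
    · obtain ⟨hA, hB⟩ := hker
      have hA' : f1 = f2 := by
        funext i
        have := congrFun hA i
        simpa [sub_eq_zero] using this
      have hB' : c1 = c2 := by
        rwa [sub_eq_zero] at hB
      simp [hA', hB']
    · intro x
      have hx := congrFun hfe x
      simp only [hΦ] at hx
      simp only [Pi.sub_apply, sub_mul, map_sub, Finset.sum_sub_distrib]
      linear_combination hx
  refine ⟨hmaps, hinj, ?_⟩
  -- counting argument for surjectivity
  let b : Module.Basis (Fin m) F E := (Module.finBasis F E).reindex (finCongr hdim)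
  let D := (Fin m → F) × ({z : Sym2 (Fin m) // ¬ z.IsDiag} → F)
  let ev : (E → F) → D := fun g =>
    (fun i => g (b i), fun z => Sym2.lift ⟨fun i j => QuadraticMap.polar g (b i) (b j),
       fun i j => QuadraticMap.polar_comm g (b i) (b j)⟩ z.1)
  have hev : Set.InjOn ev T := by
    rintro g1 ⟨Q1, rfl⟩ g2 ⟨Q2, rfl⟩ he
    have he1 := congrArg Prod.fst he
    have he2 := congrArg Prod.snd he
    funext x
    refine aux_qf_determined F E m b Q1 Q2 (fun i => congrFun he1 i) (fun i j hij => ?_) x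
    have h3 := congrFun he2 ⟨s(i, j), by simpa [Sym2.isDiag_iff_proj_eq] using hij⟩
    exact h3
  have hncardT : T.ncard ≤ q ^ (n * (2 * n + 1)) := by
    have h1 : T.ncard = (ev '' T).ncard := (Set.ncard_image_of_injOn hev).symm
    have h2 : (ev '' T).ncard ≤ (Set.univ : Set D).ncard :=
      Set.ncard_le_ncard (Set.subset_univ _) (Set.toFinite _)
    have h3 : (Set.univ : Set D).ncard = Fintype.card D := by
      rw [Set.ncard_univ, Nat.card_eq_fintype_card]
    have h4 : Fintype.card D = q ^ (n * (2 * n + 1)) := by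
      have hsub : Fintype.card {z : Sym2 (Fin m) // ¬ z.IsDiag} = n * (2 * n - 1) := by
        rw [Sym2.card_subtype_not_diag, Fintype.card_fin, Nat.choose_two_right, hm,
          mul_assoc, Nat.mul_div_cancel_left _ two_pos]
      show Fintype.card ((Fin m → F) × _) = _
      rw [Fintype.card_prod, Fintype.card_fun, Fintype.card_fun, hsub, Fintype.card_fin,
        ← hq, ← pow_add]
      congr 1
      have h5 : 2 * n - 1 + 2 = 2 * n + 1 := by omega
      calc m + n * (2 * n - 1) = n * (2 * n - 1) + n * 2 := by omega
      _ = n * (2 * n - 1 + 2) := by rw [mul_add]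
      _ = n * (2 * n + 1) := by rw [h5]
    omega
  have himgcard : (Φ '' Set.univ).ncard = q ^ (n * (2 * n + 1)) := by
    rw [Set.ncard_image_of_injOn hinj, Set.ncard_univ, Nat.card_eq_fintype_card,
      Fintype.card_prod, Fintype.card_fun, Fintype.card_fin, hcardE, hcardK, ← pow_mul, ← pow_add]
    congr 1
    rw [hm]
    ring
  have heq : Φ '' Set.univ = T := by
    refine Set.eq_of_subset_of_ncard_le ?_ ?_ (Set.toFinite _)
    · exact Set.image_subset_iff.mpr hmaps
    · rw [himgcard]; exact hncardT
  rw [Set.SurjOn, heq]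
end
end

section
/- Let q be a prime power, m ≥ 1 an integer, and let L = Σ_{k=0}^{m−1} c_k X^{q^k} be a linearised polynomial with coefficients c_k ∈ F_{q^m}. Let ξ_1, …, ξ_m be an F_q-basis of F_{q^m}, let M ∈ F_q^{m×m} be the matrix with entries M_{ij} = Tr_m(ξ_i·L(ξ_j)) for 1 ≤ i, j ≤ m, let P ∈ F_{q^m}^{m×m} have entries P_{ij} = ξ_i^{q^j}, and let D_L ∈ F_{q^m}^{m×m} be the Dickson matrix of L, with entries (D_L)_{ij} = c_{(j−i) mod m}^{q^i}. Then, regarding M as a matrix over F_{q^m} via the inclusion F_q ⊆ F_{q^m}, one has M = P·D_L·Pᵀ. -/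
open scoped BigOperators

theorem frobPow_exists (F E : Type) [Field F] [Fintype F] [Field E] [Fintype E] [Algebra F E]
    (q : ℕ) (hq : q = Fintype.card F) (t : ℕ) :
    ∃ σ : E ≃ₐ[F] E, ∀ x, σ x = x ^ q ^ t := by
  classical
  set p := ringChar F with hp0
  haveI : Fact p.Prime := ⟨CharP.char_is_prime F p⟩
  haveI : CharP F p := ringChar.charP F
  haveI : CharP E p := charP_of_injective_algebraMap (algebraMap F E).injective p
  obtain ⟨n, -, hcard⟩ := FiniteField.card F p
  have hqt : ∀ x : E, x ^ q ^ t = iterateFrobenius E p ((n : ℕ) * t) x := by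
    intro x
    rw [iterateFrobenius_def, hq, hcard, ← pow_mul]
  let f : E →ₐ[F] E :=
    { toRingHom := iterateFrobenius E p ((n : ℕ) * t)
      commutes' := by
        intro r
        show iterateFrobenius E p ((n:ℕ)*t) (algebraMap F E r) = algebraMap F E r
        rw [← hqt, ← map_pow, hq, FiniteField.pow_card_pow] }
  have hbij : Function.Bijective f :=
    Finite.injective_iff_bijective.mp (f.toRingHom.injective)
  exact ⟨AlgEquiv.ofBijective f hbij, fun x => by rw [hqt]; rfl⟩


/-- **Lemma (Dickson matrix factorisation).**
Let `L = ∑_k c_k X^{q^k}` be a linearised polynomial over `E = F_{q^m}`, let `ξ` be an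
`F_q`-basis of `E`, let `M` over `F_q` be given by `M i j = Tr_m (ξ i · L (ξ j))`, let
`P i j = ξ i ^ (q ^ (j+1))` and let `D_L` be the Dickson matrix of `L`, with entries
`(D_L) i j = c_{(j - i) mod m} ^ (q ^ (i+1))` (indices `0, …, m-1`; by convention the
`q^m`-power map is the identity on `E`, matching the classical `1`-based convention).
Then, regarding `M` as a matrix over `E`, one has `M = P · D_L · Pᵀ`. -/
theorem dickson_matrix_factorisation
    (F E : Type) [Field F] [Fintype F] [Field E] [Fintype E] [Algebra F E]
    (q : ℕ) (hq : q = Fintype.card F)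
    (m : ℕ) (hm : 1 ≤ m) (hdim : Module.finrank F E = m)
    (c : Fin m → E) (ξ : Module.Basis (Fin m) F E)
    (M : Matrix (Fin m) (Fin m) F)
    (hM : ∀ i j, M i j = Algebra.trace F E (ξ i * ∑ k : Fin m, c k * ξ j ^ q ^ (k : ℕ)))
    (P : Matrix (Fin m) (Fin m) E)
    (hP : ∀ i j, P i j = ξ i ^ q ^ ((j : ℕ) + 1))
    (D : Matrix (Fin m) (Fin m) E)
    (hD : ∀ i j, D i j = c (j - i) ^ q ^ ((i : ℕ) + 1)) :
    M.map (algebraMap F E) = P * D * P.transpose := by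
  classical
  haveI : NeZero m := ⟨by omega⟩
  have hq2 : 1 < q := hq ▸ Fintype.one_lt_card
  have cardE : Fintype.card E = q ^ m := by rw [hq, ← hdim]; exact Module.card_eq_pow_finrank
  -- powers of q on E depend only on the exponent mod m
  have key1 : ∀ (x : E) (a r : ℕ), x ^ q ^ (a % m + r) = x ^ q ^ (a + r) := by
    intro x a r
    conv_rhs => rw [← Nat.mod_add_div a m]
    generalize a / m = t
    induction t with
    | zero => simp
    | succ t ih =>
      have h : a % m + m * (t + 1) + r = a % m + m * t + r + m := by ring
      conv_rhs => rw [h, pow_add, pow_mul, ← cardE]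
      rw [FiniteField.pow_card]
      exact ih
  -- the Frobenius powers
  choose e he using frobPow_exists F E q hq
  -- injectivity of k ↦ e (k+1) on Fin m
  have haux : ∀ k k' : Fin m, (k : ℕ) ≤ (k' : ℕ) → e ((k : ℕ) + 1) = e ((k' : ℕ) + 1) → k = k' := by
    intro k k' hle hekk
    by_contra hne
    set d := (k' : ℕ) - (k : ℕ) with hd
    have hd1 : 1 ≤ d := by
      have : (k : ℕ) ≠ (k' : ℕ) := fun h => hne (Fin.ext h)
      omega
    have hdm : d < m := by have := k'.isLt; omega
    have hfix : ∀ x : E, x ^ q ^ d = x := by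
      intro x
      have h1 : e ((k : ℕ) + 1) (x ^ q ^ d) = e ((k : ℕ) + 1) x := by
        rw [he, he, ← pow_mul, ← pow_add]
        have hdk : d + ((k : ℕ) + 1) = (k' : ℕ) + 1 := by omega
        rw [hdk, ← he, ← hekk, he]
      exact (e ((k : ℕ) + 1)).injective h1
    have hqd1 : 1 < q ^ d := Nat.one_lt_pow (by omega) hq2
    have hdvd : q ^ m - 1 ∣ q ^ d - 1 := by
      rw [← cardE, ← FiniteField.forall_pow_eq_one_iff]
      intro u
      have h3 : q ^ d - 1 + 1 = q ^ d := by omega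
      have hu : (u : E) ^ (q ^ d - 1) * (u : E) = (u : E) := by
        rw [← pow_succ, h3, hfix]
      have hu2 : (u : E) ^ (q ^ d - 1) = 1 :=
        mul_right_cancel₀ u.ne_zero (by rw [hu, one_mul])
      ext
      simpa using hu2
    have h1 : q ^ d - 1 < q ^ m - 1 :=
      Nat.sub_lt_sub_right (by omega) (Nat.pow_lt_pow_right hq2 hdm)
    exact absurd (Nat.le_of_dvd (by omega) hdvd) (not_le.mpr h1)
  have hinj : Function.Injective (fun k : Fin m => e ((k : ℕ) + 1)) := by
    intro k k' h
    rcases le_total (k : ℕ) (k' : ℕ) with hle | hle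
    · exact haux k k' hle h
    · exact (haux k' k hle h.symm).symm
  have hbij : Function.Bijective (fun k : Fin m => e ((k : ℕ) + 1)) := by
    rw [Fintype.bijective_iff_injective_and_card]
    exact ⟨hinj, by rw [Fintype.card_fin, ← Nat.card_eq_fintype_card, IsGalois.card_aut_eq_finrank, hdim]⟩
  -- trace formula
  have htr : ∀ y : E, algebraMap F E (Algebra.trace F E y) = ∑ k : Fin m, y ^ q ^ ((k : ℕ) + 1) := by
    intro y
    rw [trace_eq_sum_automorphisms]
    rw [← Function.Bijective.sum_comp hbij (fun σ => σ y)]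
    exact Finset.sum_congr rfl fun k _ => he _ y
  -- main computation
  ext i j
  rw [Matrix.map_apply, hM, htr]
  simp only [Matrix.mul_apply, Matrix.transpose_apply, Finset.sum_mul]
  rw [Finset.sum_comm]
  refine Finset.sum_congr rfl fun k _ => ?_
  have hhom := he ((k : ℕ) + 1)
  calc (ξ i * ∑ s : Fin m, c s * ξ j ^ q ^ (s : ℕ)) ^ q ^ ((k : ℕ) + 1)
      = e ((k : ℕ) + 1) (ξ i * ∑ s : Fin m, c s * ξ j ^ q ^ (s : ℕ)) := (hhom _).symm
    _ = ∑ s : Fin m, e ((k : ℕ) + 1) (ξ i * (c s * ξ j ^ q ^ (s : ℕ))) := by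
        rw [Finset.mul_sum, map_sum]
    _ = ∑ s : Fin m, (ξ i * (c s * ξ j ^ q ^ (s : ℕ))) ^ q ^ ((k : ℕ) + 1) := by
        simp only [hhom]
    _ = ∑ l : Fin m, P i k * D k l * P j l := by
        refine Fintype.sum_equiv (Equiv.addLeft k) _ _ fun s => ?_
        simp only [Equiv.coe_addLeft, hP, hD, add_sub_cancel_left]
        rw [mul_pow, mul_pow, ← pow_mul, ← pow_add]
        have hexp : ξ j ^ q ^ (((k + s : Fin m) : ℕ) + 1) = ξ j ^ q ^ ((s : ℕ) + ((k : ℕ) + 1)) := by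
          have hval : ((k + s : Fin m) : ℕ) = ((k : ℕ) + (s : ℕ)) % m := by
            simp [Fin.add_def]
          rw [hval, key1]
          have h4 : (k : ℕ) + (s : ℕ) + 1 = (s : ℕ) + ((k : ℕ) + 1) := by omega
          rw [h4]
        rw [hexp]
        ring
end
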